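/- If L is a trim lattice, then every interval [y,z] of L is trim. -/

import Mathlib

variable {α : Type*}

/-- An element is join-irreducible if it is not the minimum and is not a join
of two strictly smaller elements. -/
def JoinIrred [Lattice α] (a : α) : Prop :=
  ¬ IsBot a ∧ ∀ b c : α, b < a → c < a → b ⊔ c ≠ a

/-- An element is meet-irreducible if it is not the maximum and is not a meet
of two strictly larger elements. -/
def MeetIrred [Lattice α] (a : α) : Prop :=
  ¬ IsTop a ∧ ∀ b c : α, a < b → a < c → b ⊓ c ≠ a

/-- An element `x` is left modular if `(y ⊔ x) ⊓ z = y ⊔ (x ⊓ z)` for all `y < z`. -/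
def LeftModular [Lattice α] (x : α) : Prop :=
  ∀ y z : α, y < z → (y ⊔ x) ⊓ z = y ⊔ (x ⊓ z)

/-- A maximal chain `⊥ = x 0 ⋖ x 1 ⋖ ⋯ ⋖ x n = ⊤` all of whose elements are left modular. -/
def IsLMChain [Lattice α] {n : ℕ} (x : Fin (n + 1) → α) : Prop :=
  IsBot (x 0) ∧ IsTop (x (Fin.last n)) ∧ (∀ i : Fin n, x i.castSucc ⋖ x i.succ) ∧
    ∀ i, LeftModular (x i)

/-- A finite lattice is trim if it has a left modular maximal chain of `n + 1` elements,
exactly `n` join-irreducibles and exactly `n` meet-irreducibles. -/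
def Trim (α : Type*) [Lattice α] [Finite α] : Prop :=
  ∃ (n : ℕ) (x : Fin (n + 1) → α), IsLMChain x ∧
    Nat.card {v : α // JoinIrred v} = n ∧ Nat.card {v : α // MeetIrred v} = n

section Aux

variable [Lattice α]

/-- minimal elements exist in finite sets -/
lemma exists_min' [Finite α] {S : Set α} (h : S.Nonempty) : ∃ a ∈ S, ∀ b ∈ S, ¬ b < a := by
  classical
  obtain ⟨a, ha, hmin⟩ := Finset.exists_minimal (s := S.toFinite.toFinset)
    (by simpa [Set.Finite.toFinset_nonempty] using h)
  exact ⟨a, by simpa using ha, fun b hb hlt => hlt.not_ge (hmin (by simpa using hb) hlt.le)⟩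

lemma exists_max' [Finite α] {S : Set α} (h : S.Nonempty) : ∃ a ∈ S, ∀ b ∈ S, ¬ a < b := by
  classical
  obtain ⟨a, ha, hmax⟩ := Finset.exists_maximal (s := S.toFinite.toFinset)
    (by simpa [Set.Finite.toFinset_nonempty] using h)
  exact ⟨a, by simpa using ha, fun b hb hlt => hlt.not_ge (hmax (by simpa using hb) hlt.le)⟩

variable {y z : α} {n : ℕ} {X : ℕ → α}
  (hyz : y ≤ z)
  (hX0 : ∀ a, X 0 ≤ a)
  (hXtop : ∀ k, n ≤ k → ∀ a, a ≤ X k)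
  (hXcov : ∀ k, k < n → X k ⋖ X (k+1))
  (hXlm : ∀ k, LeftModular (X k))
  (hXmono : Monotone X)

end Aux

/-- the interval chain -/
def Wc [Lattice α] (y z : α) (X : ℕ → α) (k : ℕ) : α := y ⊔ (X k ⊓ z)

@[simp] lemma Wc_def [Lattice α] (y z : α) (X : ℕ → α) (k : ℕ) :
    Wc y z X k = y ⊔ (X k ⊓ z) := rfl

section Aux2

variable [Lattice α]
variable {y z : α} {n : ℕ} {X : ℕ → α}
  (hyz : y ≤ z)
  (hX0 : ∀ a, X 0 ≤ a)
  (hXtop : ∀ k, n ≤ k → ∀ a, a ≤ X k)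
  (hXcov : ∀ k, k < n → X k ⋖ X (k+1))
  (hXlm : ∀ k, LeftModular (X k))
  (hXmono : Monotone X)

local notation "W" => Wc y z X

include hyz hXlm in
lemma W_alt (k : ℕ) : W k = (y ⊔ X k) ⊓ z := by
  simp only [Wc_def]
  rcases eq_or_lt_of_le hyz with he | hlt
  · subst he
    rw [sup_eq_left.2 (inf_le_right : X k ⊓ y ≤ y),
      inf_eq_right.2 (le_sup_left : y ≤ y ⊔ X k)]
  · exact (hXlm k y z hlt).symm

include hyz hXtop hXcov hXlm hXmono in
lemma step_lemma (k : ℕ) (u : α) (hyu : y ≤ u) (huz : u ≤ z)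
    (hWu : W k ≤ u) (huW : u ≤ W (k+1)) : u = W k ∨ u = W (k+1) := by
  simp only [Wc_def] at hWu huW ⊢
  rcases eq_or_lt_of_le huW with he | hlt
  · right; exact he
  by_cases hkn : n ≤ k
  · left
    have h1 : X k ⊓ z = z := inf_eq_right.2 (hXtop k hkn z)
    have h2 : X (k+1) ⊓ z = z := inf_eq_right.2 (hXtop (k+1) (by omega) z)
    rw [h1] at hWu ⊢
    rw [h2] at hlt
    exact le_antisymm (le_trans huz le_sup_right) hWu
    
  push_neg at hkn
  have huz' : u < z := lt_of_lt_of_le hlt (sup_le hyz inf_le_right)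
  have hcv := hXcov k hkn
  have hXkz : X k ⊓ z ≤ u := le_trans le_sup_right hWu
  have ht : X k ⊔ (u ⊓ X (k+1)) = X k ∨ X k ⊔ (u ⊓ X (k+1)) = X (k+1) := by
    have h2 : X k ⊔ (u ⊓ X (k+1)) ≤ X (k+1) := sup_le hcv.le inf_le_right
    rcases eq_or_lt_of_le h2 with h | h
    · right; exact h
    · left
      rcases eq_or_lt_of_le (le_sup_left : X k ≤ X k ⊔ (u ⊓ X (k+1))) with h' | h'
      · exact h'.symm
      · exact absurd h (hcv.2 h')
  rcases ht with ht | ht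
  · -- u ⊓ X (k+1) ≤ X k
    have hux : u ⊓ X (k+1) ≤ X k := sup_eq_left.1 ht
    rcases eq_or_lt_of_le hyu with hyeq | hylt
    · left
      exact le_antisymm (hyeq ▸ (le_sup_left : y ≤ y ⊔ (X k ⊓ z))) hWu
    · have h5 : u ≤ y ⊔ X (k+1) :=
        le_trans hlt.le (sup_le le_sup_left (le_trans inf_le_left le_sup_right))
      have h6 : (y ⊔ X (k+1)) ⊓ u = y ⊔ (X (k+1) ⊓ u) := hXlm (k+1) y u hylt
      have h7 : u = y ⊔ (X (k+1) ⊓ u) := by rw [← h6, inf_eq_right.2 h5]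
      have h8 : u ≤ y ⊔ X k := by
        rw [h7]
        exact sup_le le_sup_left (le_trans (inf_comm u (X (k+1)) ▸ hux) le_sup_right)
      left
      refine le_antisymm ?_ hWu
      rw [(by simpa using W_alt hyz hXlm k : y ⊔ (X k ⊓ z) = (y ⊔ X k) ⊓ z)]
      exact le_inf h8 huz
  · -- X (k+1) ≤ X k ⊔ u
    exfalso
    have hXk1 : X (k+1) ≤ X k ⊔ u := by
      rw [← ht]; exact sup_le le_sup_left (le_trans inf_le_left le_sup_right)
    have hcon : y ⊔ (X (k+1) ⊓ z) ≤ u := by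
      rw [(by simpa using W_alt hyz hXlm (k+1) :
        y ⊔ (X (k+1) ⊓ z) = (y ⊔ X (k+1)) ⊓ z)]
      calc (y ⊔ X (k+1)) ⊓ z ≤ (u ⊔ X k) ⊓ z := by
            refine inf_le_inf_right z (sup_le (le_trans hyu le_sup_left) ?_)
            exact le_trans hXk1 (sup_comm (X k) u ▸ le_rfl)
        _ = u ⊔ (X k ⊓ z) := hXlm k u z huz'
        _ ≤ u := sup_le le_rfl hXkz
    exact absurd hcon (not_le_of_gt hlt)

include hyz hXlm in
lemma W_lm (k : ℕ) (a b : α) (hya : y ≤ a) (hbz : b ≤ z) (hab : a < b) :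
    (a ⊔ W k) ⊓ b = a ⊔ ((W k) ⊓ b) := by
  simp only [Wc_def]
  have haz : a < z := lt_of_lt_of_le hab hbz
  have hyb : y < b := lt_of_le_of_lt hya hab
  have e1 : a ⊔ (y ⊔ (X k ⊓ z)) = (a ⊔ X k) ⊓ z := by
    rw [← sup_assoc, sup_eq_left.2 hya, hXlm k a z haz]
  have e2 : (a ⊔ (y ⊔ (X k ⊓ z))) ⊓ b = a ⊔ (X k ⊓ b) := by
    rw [e1, inf_assoc, inf_eq_right.2 hbz, hXlm k a b hab]
  have e3 : (y ⊔ (X k ⊓ z)) ⊓ b = y ⊔ (X k ⊓ b) := by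
    rw [(by simpa using W_alt hyz hXlm k : y ⊔ (X k ⊓ z) = (y ⊔ X k) ⊓ z), inf_assoc, inf_eq_right.2 hbz, hXlm k y b hyb]
  rw [e2, e3, ← sup_assoc, sup_eq_left.2 hya]

include hyz hXlm in
lemma keyJ [Finite α] (v : α) (hyv : y ≤ v) (hvz : v ≤ z) (hvy : v ≠ y)
    (hJI2 : ∀ b c : α, y ≤ b → b ≤ z → y ≤ c → c ≤ z → b < v → c < v → b ⊔ c ≠ v)
    (k : ℕ) (hk : 0 < k) (hvW : v ≤ W k) (hvW' : ¬ v ≤ W (k-1)) :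
    ∃ j : α, JoinIrred j ∧ j ≤ X k ∧ ¬ j ≤ X (k-1) ∧ y ⊔ j = v := by
  simp only [Wc_def] at hvW hvW'
  have hylt : y < v := lt_of_le_of_ne hyv (Ne.symm hvy)
  have hvle : v ≤ y ⊔ X k :=
    le_trans hvW (sup_le le_sup_left (le_trans inf_le_left le_sup_right))
  have hb0 : y ⊔ (X k ⊓ v) = v := by
    have h := hXlm k y v hylt
    rw [← h, inf_eq_right.2 hvle]
  obtain ⟨j, ⟨hj1, hj2⟩, hjmin⟩ :=
    exists_min' (S := {b | b ≤ X k ⊓ v ∧ y ⊔ b = v}) ⟨X k ⊓ v, le_rfl, hb0⟩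
  refine ⟨j, ⟨?_, ?_⟩, le_trans hj1 inf_le_left, ?_, hj2⟩
  · intro hbot
    exact hvy (by rw [← hj2, sup_eq_left.2 (hbot y)])
  · intro b c hb hc heq
    have hbv : b ≤ v := le_trans hb.le (le_trans hj1 inf_le_right)
    have hcv : c ≤ v := le_trans hc.le (le_trans hj1 inf_le_right)
    have hyblt : y ⊔ b < v := by
      rcases eq_or_lt_of_le (sup_le hyv hbv) with he | hlt
      · exact absurd hb (hjmin b ⟨le_trans hb.le hj1, he⟩)
      · exact hlt
    have hyclt : y ⊔ c < v := by
      rcases eq_or_lt_of_le (sup_le hyv hcv) with he | hlt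
      · exact absurd hc (hjmin c ⟨le_trans hc.le hj1, he⟩)
      · exact hlt
    refine hJI2 (y ⊔ b) (y ⊔ c) le_sup_left (le_trans (sup_le hyv hbv) hvz)
      le_sup_left (le_trans (sup_le hyv hcv) hvz) hyblt hyclt ?_
    rw [sup_sup_sup_comm, sup_idem, heq, hj2]
  · intro hle
    apply hvW'
    rw [← hj2]
    refine sup_le le_sup_left (le_trans (le_inf hle ?_) le_sup_right)
    exact le_trans (le_trans hj1 inf_le_right) hvz

include hyz hXlm in
lemma keyM [Finite α] (v : α) (hyv : y ≤ v) (hvz : v ≤ z) (hvne : v ≠ z)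
    (hMI2 : ∀ b c : α, y ≤ b → b ≤ z → y ≤ c → c ≤ z → v < b → v < c → b ⊓ c ≠ v)
    (k : ℕ) (hWv : W k ≤ v) (hWv' : ¬ W (k+1) ≤ v) :
    ∃ q : α, MeetIrred q ∧ X k ≤ q ∧ ¬ X (k+1) ≤ q ∧ z ⊓ q = v := by
  simp only [Wc_def] at hWv hWv'
  have hvlt : v < z := lt_of_le_of_ne hvz hvne
  have hWkv : X k ⊓ z ≤ v := le_trans le_sup_right hWv
  have hq0 : z ⊓ (X k ⊔ v) = v := by
    rw [inf_comm z (X k ⊔ v), sup_comm (X k) v, hXlm k v z hvlt, sup_eq_left.2 hWkv]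
  obtain ⟨q, ⟨hq1, hq2⟩, hqmax⟩ :=
    exists_max' (S := {b | X k ⊔ v ≤ b ∧ z ⊓ b = v}) ⟨X k ⊔ v, le_rfl, hq0⟩
  have hvq : v ≤ q := le_trans le_sup_right hq1
  refine ⟨q, ⟨?_, ?_⟩, le_trans le_sup_left hq1, ?_, hq2⟩
  · intro htq
    exact hvne (by rw [← hq2, inf_eq_left.2 (htq z)])
  · intro b c hb hc heq
    have hvb : v ≤ z ⊓ b := by rw [← hq2]; exact inf_le_inf_left z hb.le
    have hvc : v ≤ z ⊓ c := by rw [← hq2]; exact inf_le_inf_left z hc.le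
    have hblt : v < z ⊓ b := by
      rcases eq_or_lt_of_le hvb with he | hlt
      · exact absurd hb (hqmax b ⟨le_trans hq1 hb.le, he.symm⟩)
      · exact hlt
    have hclt : v < z ⊓ c := by
      rcases eq_or_lt_of_le hvc with he | hlt
      · exact absurd hc (hqmax c ⟨le_trans hq1 hc.le, he.symm⟩)
      · exact hlt
    refine hMI2 (z ⊓ b) (z ⊓ c) (le_trans hyv hvb) inf_le_left
      (le_trans hyv hvc) inf_le_left hblt hclt ?_
    rw [inf_inf_inf_comm, inf_idem, heq, hq2]
  · intro hle
    apply hWv'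
    refine sup_le (le_trans hyv le_rfl) ?_
    calc X (k+1) ⊓ z ≤ q ⊓ z := inf_le_inf_right z hle
      _ = v := by rw [inf_comm, hq2]

include hX0 hXtop hXcov hXmono in
lemma uniqJ [Finite α] (hJcard : Nat.card {v : α // JoinIrred v} = n)
    (k : ℕ) (hk : 0 < k) (hkn : k ≤ n) (j j' : α) (hj : JoinIrred j) (hj' : JoinIrred j')
    (h1 : j ≤ X k) (h2 : ¬ j ≤ X (k-1)) (h3 : j' ≤ X k) (h4 : ¬ j' ≤ X (k-1)) : j = j' := by
  classical
  have hn : 0 < n := lt_of_lt_of_le hk hkn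
  have hex : ∀ a : α, ∃ t, a ≤ X (t+1) := fun a => ⟨n-1, by
    have hne : n - 1 + 1 = n := by omega
    rw [hne]; exact hXtop n le_rfl a⟩
  let f : {v : α // JoinIrred v} → Fin n := fun j =>
    ⟨Nat.find (hex j.1), by
      have hle : Nat.find (hex j.1) ≤ n - 1 := Nat.find_le (by
        have hne : n - 1 + 1 = n := by omega
        rw [hne]; exact hXtop n le_rfl j.1)
      omega⟩
  have hsurj : Function.Surjective f := by
    intro i
    have hSne : ({a : α | a ≤ X (i.1+1) ∧ ¬ a ≤ X i.1} : Set α).Nonempty :=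
      ⟨X (i.1+1), le_rfl, (hXcov i.1 i.2).lt.not_ge⟩
    obtain ⟨a, ⟨ha1, ha2⟩, hamin⟩ := exists_min' hSne
    have haJI : JoinIrred a := by
      constructor
      · exact fun hb => ha2 (hb _)
      · intro b c hb hc heq
        have hbX : b ≤ X i.1 := by
          by_contra hbX
          exact hamin b ⟨le_trans hb.le ha1, hbX⟩ hb
        have hcX : c ≤ X i.1 := by
          by_contra hcX
          exact hamin c ⟨le_trans hc.le ha1, hcX⟩ hc
        exact ha2 (heq ▸ sup_le hbX hcX)
    refine ⟨⟨a, haJI⟩, ?_⟩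
    have hv1 : Nat.find (hex a) ≤ i.1 := Nat.find_le ha1
    have hv2 : ¬ Nat.find (hex a) < i.1 := by
      intro hlt
      exact ha2 (le_trans (Nat.find_spec (hex a)) (hXmono (by omega)))
    exact Fin.ext (by show Nat.find (hex a) = i.1; omega)
  haveI := Fintype.ofFinite {v : α // JoinIrred v}
  have hcard : Fintype.card {v : α // JoinIrred v} = n := by
    rw [← Nat.card_eq_fintype_card]; exact hJcard
  have hinj : Function.Injective f :=
    ((Fintype.bijective_iff_surjective_and_card f).2 ⟨hsurj, by simp [hcard]⟩).1
  have hval : ∀ (a : α) (ha : JoinIrred a), a ≤ X k → ¬ a ≤ X (k-1) →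
      f ⟨a, ha⟩ = ⟨k-1, by omega⟩ := by
    intro a ha ha1 ha2
    have hv1 : Nat.find (hex a) ≤ k-1 := Nat.find_le (by
      have hne : k - 1 + 1 = k := by omega
      rw [hne]; exact ha1)
    have hv2 : ¬ Nat.find (hex a) < k-1 := fun hlt =>
      ha2 (le_trans (Nat.find_spec (hex a)) (hXmono (by omega)))
    exact Fin.ext (by show Nat.find (hex a) = k-1; omega)
  have := hinj ((hval j hj h1 h2).trans (hval j' hj' h3 h4).symm)
  exact congrArg Subtype.val this

include hX0 hXtop hXcov hXmono in
lemma uniqM [Finite α] (hMcard : Nat.card {v : α // MeetIrred v} = n)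
    (k : ℕ) (hkn : k < n) (q q' : α) (hq : MeetIrred q) (hq' : MeetIrred q')
    (h1 : X k ≤ q) (h2 : ¬ X (k+1) ≤ q) (h3 : X k ≤ q') (h4 : ¬ X (k+1) ≤ q') : q = q' := by
  classical
  let g : {v : α // MeetIrred v} → Fin n := fun q =>
    ⟨Nat.findGreatest (fun t => X t ≤ q.1) n, by
      have hle : Nat.findGreatest (fun t => X t ≤ q.1) n ≤ n := Nat.findGreatest_le n
      rcases eq_or_lt_of_le hle with he | hlt
      · exfalso
        have hspec : X (Nat.findGreatest (fun t => X t ≤ q.1) n) ≤ q.1 :=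
          Nat.findGreatest_spec (P := fun t => X t ≤ q.1) (Nat.zero_le n) (hX0 q.1)
        rw [he] at hspec
        exact q.2.1 (fun a => le_trans (hXtop n le_rfl a) hspec)
      · exact hlt⟩
  have hsurj : Function.Surjective g := by
    intro i
    have hSne : ({a : α | X i.1 ≤ a ∧ ¬ X (i.1+1) ≤ a} : Set α).Nonempty :=
      ⟨X i.1, le_rfl, (hXcov i.1 i.2).lt.not_ge⟩
    obtain ⟨a, ⟨ha1, ha2⟩, hamax⟩ := exists_max' hSne
    have haMI : MeetIrred a := by
      constructor
      · exact fun hb => ha2 (hb _)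
      · intro b c hb hc heq
        have hbX : X (i.1+1) ≤ b := by
          by_contra hbX
          exact hamax b ⟨le_trans ha1 hb.le, hbX⟩ hb
        have hcX : X (i.1+1) ≤ c := by
          by_contra hcX
          exact hamax c ⟨le_trans ha1 hc.le, hcX⟩ hc
        exact ha2 (heq ▸ le_inf hbX hcX)
    refine ⟨⟨a, haMI⟩, ?_⟩
    have hv1 : i.1 ≤ Nat.findGreatest (fun t => X t ≤ a) n := Nat.le_findGreatest i.2.le ha1
    have hv2 : ¬ i.1 < Nat.findGreatest (fun t => X t ≤ a) n := by
      intro hlt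
      have hspec : X (Nat.findGreatest (fun t => X t ≤ a) n) ≤ a :=
        Nat.findGreatest_spec (P := fun t => X t ≤ a) (Nat.zero_le n) (hX0 a)
      exact ha2 (le_trans (hXmono (by omega)) hspec)
    exact Fin.ext (by show Nat.findGreatest (fun t => X t ≤ a) n = i.1; omega)
  haveI := Fintype.ofFinite {v : α // MeetIrred v}
  have hcard : Fintype.card {v : α // MeetIrred v} = n := by
    rw [← Nat.card_eq_fintype_card]; exact hMcard
  have hinj : Function.Injective g :=
    ((Fintype.bijective_iff_surjective_and_card g).2 ⟨hsurj, by simp [hcard]⟩).1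
  have hval : ∀ (a : α) (ha : MeetIrred a), X k ≤ a → ¬ X (k+1) ≤ a →
      g ⟨a, ha⟩ = ⟨k, hkn⟩ := by
    intro a ha ha1 ha2
    have hv1 : k ≤ Nat.findGreatest (fun t => X t ≤ a) n := Nat.le_findGreatest hkn.le ha1
    have hv2 : ¬ k < Nat.findGreatest (fun t => X t ≤ a) n := by
      intro hlt
      have hspec : X (Nat.findGreatest (fun t => X t ≤ a) n) ≤ a :=
        Nat.findGreatest_spec (P := fun t => X t ≤ a) (Nat.zero_le n) (hX0 a)
      exact ha2 (le_trans (hXmono (by omega)) hspec)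
    exact Fin.ext (by show Nat.findGreatest (fun t => X t ≤ a) n = k; omega)
  have := hinj ((hval q hq h1 h2).trans (hval q' hq' h3 h4).symm)
  exact congrArg Subtype.val this

end Aux2

/-- Every interval of a trim lattice is trim. -/
theorem interval_trim [Lattice α] [Finite α] (h : Trim α) (y z : α) (hyz : y ≤ z) :
    Trim (Set.Icc y z) := by
  classical
  obtain ⟨n, x, ⟨hbot, htop, hcov, hlm⟩, hJcard, hMcard⟩ := h
  set X : ℕ → α := fun k => x ⟨min k n, by omega⟩ with hXdef
  have hX0 : ∀ a, X 0 ≤ a := by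
    intro a
    have h0 : X 0 = x 0 := congrArg x (Fin.ext (by simp))
    rw [h0]; exact hbot a
  have hXtop : ∀ k, n ≤ k → ∀ a, a ≤ X k := by
    intro k hk a
    have h0 : X k = x (Fin.last n) := congrArg x (Fin.ext (by simp [Fin.last]; omega))
    rw [h0]; exact htop a
  have hXcov : ∀ k, k < n → X k ⋖ X (k+1) := by
    intro k hk
    have h1 : X k = x (Fin.castSucc ⟨k, hk⟩) := congrArg x (Fin.ext (by simp; omega))
    have h2 : X (k+1) = x (Fin.succ ⟨k, hk⟩) := congrArg x (Fin.ext (by simp; omega))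
    rw [h1, h2]; exact hcov ⟨k, hk⟩
  have hXlm : ∀ k, LeftModular (X k) := fun k => hlm _
  have hXle : ∀ k, X k ≤ X (k+1) := by
    intro k
    by_cases hk : k < n
    · exact (hXcov k hk).le
    · exact le_of_eq (congrArg x (Fin.ext (by simp; omega)))
  have hXmono : Monotone X := monotone_nat_of_le_succ hXle
  set W : ℕ → α := Wc y z X with hWdef
  have hWs : ∀ k, W k = y ⊔ (X k ⊓ z) := fun k => rfl
  have hW0 : W 0 = y := by
    rw [hWs 0]; exact sup_eq_left.2 (le_trans inf_le_left (hX0 y))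
  have hWtop : ∀ k, n ≤ k → W k = z := by
    intro k hk
    rw [hWs k, inf_eq_right.2 (hXtop k hk z), sup_eq_right.2 hyz]
  have hWmono : Monotone W := monotone_nat_of_le_succ (fun k =>
    sup_le_sup_left (inf_le_inf_right z (hXle k)) y)
  have hWy : ∀ k, y ≤ W k := fun k => le_sup_left
  have hWz : ∀ k, W k ≤ z := fun k => sup_le hyz inf_le_right
  have hmem : ∀ k, W k ∈ Set.Icc y z := fun k => ⟨hWy k, hWz k⟩
  -- the finset of first-occurrence indices
  set T : Finset ℕ := (Finset.range (n+1)).filter (fun k => ∀ t < k, W t ≠ W k) with hTdef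
  have hT0 : 0 ∈ T := by simp [hTdef]
  have hTn : ∀ k ∈ T, k ≤ n := by
    intro k hk
    rw [hTdef, Finset.mem_filter, Finset.mem_range] at hk
    omega
  have hTfirst : ∀ k ∈ T, ∀ t, t < k → W t ≠ W k := by
    intro k hk
    rw [hTdef, Finset.mem_filter] at hk
    exact hk.2
  have hTin : ∀ k, 0 < k → k ≤ n → W (k-1) ≠ W k → k ∈ T := by
    intro k h0 hkn hne
    rw [hTdef, Finset.mem_filter, Finset.mem_range]
    refine ⟨by omega, ?_⟩
    intro t ht heq
    exact hne (le_antisymm (hWmono (by omega))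
      (le_trans (le_of_eq heq.symm) (hWmono (by omega : t ≤ k - 1))))
  have hexfo : ∀ k : ℕ, ∃ t, W t = W k := fun k => ⟨k, rfl⟩
  have hfoT : ∀ k, k ≤ n → Nat.find (hexfo k) ∈ T := by
    intro k hk
    rw [hTdef, Finset.mem_filter, Finset.mem_range]
    have h2 : Nat.find (hexfo k) ≤ k := Nat.find_le rfl
    refine ⟨by omega, ?_⟩
    intro t ht heq
    exact Nat.find_min (hexfo k) ht (heq.trans (Nat.find_spec (hexfo k)))
  have hflat : ∀ k, k ≤ n → k ∉ T → 0 < k → W k = W (k-1) := by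
    intro k hk hkT hk0
    have hne : Nat.find (hexfo k) ≠ k := fun he => hkT (he ▸ hfoT k hk)
    have h2 : Nat.find (hexfo k) ≤ k := Nat.find_le rfl
    have h1 : Nat.find (hexfo k) ≤ k - 1 := by omega
    have h3 : W (Nat.find (hexfo k)) ≤ W (k-1) := hWmono h1
    rw [Nat.find_spec (hexfo k)] at h3
    exact le_antisymm h3 (hWmono (by omega))
  have hTne : T.Nonempty := ⟨0, hT0⟩
  set m : ℕ := T.card - 1 with hmdef
  have hTcard : T.card = m + 1 := by
    have := Finset.card_pos.2 hTne
    omega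
  set e : Fin (m+1) ≃o {k // k ∈ T} := T.orderIsoOfFin hTcard with hedef
  have heT : ∀ i, (e i : ℕ) ∈ T := fun i => (e i).2
  have hemono : ∀ {i j : Fin (m+1)}, i ≤ j → ((e i : ℕ)) ≤ ((e j : ℕ)) :=
    fun hij => Subtype.coe_le_coe.2 (e.monotone hij)
  have hestrict : ∀ {i j : Fin (m+1)}, i < j → ((e i : ℕ)) < ((e j : ℕ)) :=
    fun hij => Subtype.coe_lt_coe.2 (e.strictMono hij)
  have heln : ∀ i, (e i : ℕ) ≤ n := fun i => hTn _ (heT i)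
  have he0 : (e 0 : ℕ) = 0 := by
    have h1 : e 0 ≤ ⟨0, hT0⟩ := by
      have h2 := e.monotone (Fin.zero_le (e.symm ⟨0, hT0⟩))
      rwa [OrderIso.apply_symm_apply] at h2
    exact Nat.le_antisymm (Subtype.coe_le_coe.2 h1) (Nat.zero_le _)
  have heW : W (e (Fin.last m)) = z := by
    have h1 : (⟨Nat.find (hexfo n), hfoT n le_rfl⟩ : {k // k ∈ T}) ≤ e (Fin.last m) := by
      have h2 := e.monotone (Fin.le_last (e.symm ⟨Nat.find (hexfo n), hfoT n le_rfl⟩))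
      rwa [OrderIso.apply_symm_apply] at h2
    have h3 : W (Nat.find (hexfo n)) ≤ W (e (Fin.last m)) := hWmono (Subtype.coe_le_coe.2 h1)
    rw [Nat.find_spec (hexfo n), hWtop n le_rfl] at h3
    exact le_antisymm (hWz _) h3
  have hnobet : ∀ i : Fin m, ∀ t, t ∈ T →
      ¬((e (Fin.castSucc i) : ℕ) < t ∧ t < (e (Fin.succ i) : ℕ)) := by
    intro i t ht hcon
    obtain ⟨h1, h2⟩ := hcon
    have hj : (e (e.symm ⟨t, ht⟩) : ℕ) = t := by rw [OrderIso.apply_symm_apply]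
    rw [← hj] at h1 h2
    have hj1 : Fin.castSucc i < e.symm ⟨t, ht⟩ := e.lt_iff_lt.1 (Subtype.coe_lt_coe.1 h1)
    have hj2 : e.symm ⟨t, ht⟩ < Fin.succ i := e.lt_iff_lt.1 (Subtype.coe_lt_coe.1 h2)
    rw [Fin.lt_def] at hj1 hj2
    simp only [Fin.coe_castSucc, Fin.val_succ] at hj1 hj2
    omega
  have hconst : ∀ i : Fin m, ∀ t, (e (Fin.castSucc i) : ℕ) ≤ t → t < (e (Fin.succ i) : ℕ) →
      W t = W (e (Fin.castSucc i)) := by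
    intro i t
    induction t with
    | zero =>
      intro h1 _
      have h0 : (e (Fin.castSucc i) : ℕ) = 0 := by omega
      rw [h0]
    | succ t ih =>
      intro h1 h2
      rcases Nat.eq_or_lt_of_le h1 with he' | hlt'
      · rw [← he']
      · have ht' : W t = W (e (Fin.castSucc i)) := ih (by omega) (by omega)
        have hnot : t+1 ∉ T := fun hmemT => hnobet i (t+1) hmemT ⟨by omega, h2⟩
        have hle : t + 1 ≤ n := le_trans (by omega : t+1 ≤ (e (Fin.succ i) : ℕ)) (heln _)
        have h3 : W (t+1) = W t := by simpa using hflat (t+1) hle hnot (by omega)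
        rw [h3, ht']
  have hestep : ∀ i : Fin m, W (e (Fin.castSucc i)) < W (e (Fin.succ i)) := by
    intro i
    have h1 : (e (Fin.castSucc i) : ℕ) < (e (Fin.succ i) : ℕ) :=
      hestrict ((Fin.castSucc_lt_succ (i := i)))
    have hne : W ((e (Fin.succ i) : ℕ) - 1) ≠ W (e (Fin.succ i)) := by
      intro heq
      exact hTfirst _ (heT (Fin.succ i)) _ (by omega) heq
    have hc := hconst i ((e (Fin.succ i) : ℕ) - 1) (by omega) (by omega)
    refine lt_of_le_of_ne (hWmono h1.le) ?_
    intro heq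
    exact hne (by rw [hc, heq])
  -- the chain in the interval
  set c : Fin (m+1) → Set.Icc y z := fun i => ⟨W (e i), hmem _⟩ with hcdef
  have hc0 : IsBot (c 0) := by
    intro u
    have hcoe : (c 0 : α) = y := by
      show W (e 0) = y
      rw [he0, hW0]
    exact Subtype.coe_le_coe.1 (by rw [hcoe]; exact u.2.1)
  have hctop : IsTop (c (Fin.last m)) := by
    intro u
    have hcoe : (c (Fin.last m) : α) = z := heW
    exact Subtype.coe_le_coe.1 (by rw [hcoe]; exact u.2.2)
  have hccov : ∀ i : Fin m, c (Fin.castSucc i) ⋖ c (Fin.succ i) := by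
    intro i
    constructor
    · exact Subtype.coe_lt_coe.1 (hestep i)
    · intro u h1 h2
      have hk'0 : 0 < (e (Fin.succ i) : ℕ) := by
        have := hestrict ((Fin.castSucc_lt_succ (i := i)))
        omega
      have hc1 : W ((e (Fin.succ i) : ℕ)-1) = W (e (Fin.castSucc i)) :=
        hconst i _ (by have := hestrict ((Fin.castSucc_lt_succ (i := i))); omega) (by omega)
      have hu1 : W ((e (Fin.succ i) : ℕ)-1) ≤ (u : α) := by
        rw [hc1]; exact (Subtype.coe_lt_coe.2 h1).le
      have hu2 : (u : α) ≤ W ((e (Fin.succ i) : ℕ)-1+1) := by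
        have hh : (e (Fin.succ i) : ℕ) - 1 + 1 = (e (Fin.succ i) : ℕ) := by omega
        rw [hh]; exact (Subtype.coe_lt_coe.2 h2).le
      rcases step_lemma hyz hXtop hXcov hXlm hXmono _ u.1 u.2.1 u.2.2 hu1 hu2 with hh | hh
      · have hh' : (u : α) = W (e (Fin.castSucc i)) := by rw [← hc1]; exact hh
        have hcon : (W (e (Fin.castSucc i)) : α) < (u : α) := Subtype.coe_lt_coe.2 h1
        rw [hh'] at hcon
        exact lt_irrefl _ hcon
      · have hh' : (u : α) = W ((e (Fin.succ i) : ℕ) - 1 + 1) := hh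
        rw [(by omega : (e (Fin.succ i) : ℕ) - 1 + 1 = (e (Fin.succ i) : ℕ))] at hh'
        have hcon : (u : α) < W (e (Fin.succ i)) := Subtype.coe_lt_coe.2 h2
        rw [hh'] at hcon
        exact lt_irrefl _ hcon
  have hclm : ∀ i, LeftModular (c i) := by
    intro i a b hab
    have hab' : (a : α) < b := Subtype.coe_lt_coe.2 hab
    apply Subtype.ext
    exact W_lm hyz hXlm ((e i : ℕ)) a.1 b.1 a.2.1 b.2.2 hab'
  -- helper facts about irreducibles in the interval
  have hIbot : ∀ v : Set.Icc y z, ¬ IsBot v → (v : α) ≠ y := by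
    intro v hv hh
    exact hv (fun u => Subtype.coe_le_coe.1 (by rw [hh]; exact u.2.1))
  have hItop : ∀ v : Set.Icc y z, ¬ IsTop v → (v : α) ≠ z := by
    intro v hv hh
    exact hv (fun u => Subtype.coe_le_coe.1 (by rw [hh]; exact u.2.2))
  -- upper bound for join irreducibles
  have hexJ : ∀ v : Set.Icc y z, ∃ k, (v : α) ≤ W k :=
    fun v => ⟨n, by rw [hWtop n le_rfl]; exact v.2.2⟩
  have hJdata : ∀ v : {v : Set.Icc y z // JoinIrred v},
      0 < Nat.find (hexJ v.1) ∧ Nat.find (hexJ v.1) ≤ n ∧ Nat.find (hexJ v.1) ∈ T.erase 0 ∧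
      ∃ j, JoinIrred j ∧ j ≤ X (Nat.find (hexJ v.1)) ∧ ¬ j ≤ X (Nat.find (hexJ v.1) - 1) ∧
        y ⊔ j = (v.1 : α) := by
    intro v
    have hk1 : (v.1 : α) ≤ W (Nat.find (hexJ v.1)) := Nat.find_spec (hexJ v.1)
    have hkn : Nat.find (hexJ v.1) ≤ n :=
      Nat.find_le (by rw [hWtop n le_rfl]; exact v.1.2.2)
    have hvy : (v.1 : α) ≠ y := hIbot v.1 v.2.1
    have hk0 : 0 < Nat.find (hexJ v.1) := by
      rcases Nat.eq_zero_or_pos (Nat.find (hexJ v.1)) with hh | hh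
      · exfalso
        rw [hh, hW0] at hk1
        exact hvy (le_antisymm hk1 v.1.2.1)
      · exact hh
    have hk2 : ¬ (v.1 : α) ≤ W (Nat.find (hexJ v.1) - 1) :=
      Nat.find_min (hexJ v.1) (by omega)
    have hJI2 : ∀ b c' : α, y ≤ b → b ≤ z → y ≤ c' → c' ≤ z → b < (v.1 : α) →
        c' < (v.1 : α) → b ⊔ c' ≠ (v.1 : α) := by
      intro b c' hb1 hb2 hc1 hc2 hb3 hc3 heq
      exact v.2.2 ⟨b, hb1, hb2⟩ ⟨c', hc1, hc2⟩ (Subtype.coe_lt_coe.1 hb3)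
        (Subtype.coe_lt_coe.1 hc3) (Subtype.ext heq)
    refine ⟨hk0, hkn, ?_, keyJ hyz hXlm v.1.1 v.1.2.1 v.1.2.2 hvy hJI2 _ hk0 hk1 hk2⟩
    rw [Finset.mem_erase]
    refine ⟨by omega, hTin _ hk0 hkn ?_⟩
    intro heq
    exact hk2 (by rw [heq]; exact hk1)
  have hJup : Nat.card {v : Set.Icc y z // JoinIrred v} ≤ m := by
    have hginj : Function.Injective
        (fun v : {v : Set.Icc y z // JoinIrred v} =>
          (⟨Nat.find (hexJ v.1), (hJdata v).2.2.1⟩ : {t // t ∈ T.erase 0})) := by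
      intro v v' heq
      simp only [Subtype.mk.injEq] at heq
      obtain ⟨hk0, hkn, -, j, hj, hja, hjb, hjc⟩ := hJdata v
      obtain ⟨-, -, -, j', hj', hja', hjb', hjc'⟩ := hJdata v'
      rw [← heq] at hja' hjb'
      have hjj := uniqJ hX0 hXtop hXcov hXmono hJcard _ hk0 hkn j j' hj hj' hja hjb hja' hjb'
      apply Subtype.ext; apply Subtype.ext
      rw [← hjc, ← hjc', hjj]
    calc Nat.card {v : Set.Icc y z // JoinIrred v} ≤ Nat.card {t // t ∈ T.erase 0} :=
          Nat.card_le_card_of_injective _ hginj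
      _ = (T.erase 0).card := Nat.card_eq_finsetCard _
      _ = m := by rw [Finset.card_erase_of_mem hT0]
  -- upper bound for meet irreducibles
  have hMdata : ∀ v : {v : Set.Icc y z // MeetIrred v},
      Nat.findGreatest (fun t => W t ≤ (v.1 : α)) n < n ∧
      (Nat.findGreatest (fun t => W t ≤ (v.1 : α)) n) + 1 ∈ T.erase 0 ∧
      ∃ q, MeetIrred q ∧ X (Nat.findGreatest (fun t => W t ≤ (v.1 : α)) n) ≤ q ∧
        ¬ X (Nat.findGreatest (fun t => W t ≤ (v.1 : α)) n + 1) ≤ q ∧ z ⊓ q = (v.1 : α) := by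
    intro v
    set k := Nat.findGreatest (fun t => W t ≤ (v.1 : α)) n with hkdef
    have hk1 : W k ≤ (v.1 : α) :=
      Nat.findGreatest_spec (P := fun t => W t ≤ (v.1 : α)) (Nat.zero_le n)
        (show W 0 ≤ (v.1 : α) by rw [hW0]; exact v.1.2.1)
    have hvz : (v.1 : α) ≠ z := hItop v.1 v.2.1
    have hkn : k < n := by
      rcases eq_or_lt_of_le (Nat.findGreatest_le (P := fun t => W t ≤ (v.1 : α)) n :
        k ≤ n) with hh | hh
      · exfalso
        have hzn : W n ≤ (v.1 : α) := le_trans (le_of_eq (congrArg W hh.symm)) hk1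
        rw [hWtop n le_rfl] at hzn
        exact hvz (le_antisymm v.1.2.2 hzn)
      · exact hh
    have hk2 : ¬ W (k+1) ≤ (v.1 : α) := by
      have := Nat.findGreatest_is_greatest (P := fun t => W t ≤ (v.1 : α)) (n := n)
        (k := k+1) (by omega) (by omega)
      exact this
    have hMI2 : ∀ b c' : α, y ≤ b → b ≤ z → y ≤ c' → c' ≤ z → (v.1 : α) < b →
        (v.1 : α) < c' → b ⊓ c' ≠ (v.1 : α) := by
      intro b c' hb1 hb2 hc1 hc2 hb3 hc3 heq
      exact v.2.2 ⟨b, hb1, hb2⟩ ⟨c', hc1, hc2⟩ (Subtype.coe_lt_coe.1 hb3)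
        (Subtype.coe_lt_coe.1 hc3) (Subtype.ext heq)
    refine ⟨hkn, ?_, keyM hyz hXlm v.1.1 v.1.2.1 v.1.2.2 hvz hMI2 k hk1 hk2⟩
    rw [Finset.mem_erase]
    refine ⟨by omega, hTin _ (by omega) (by omega) ?_⟩
    intro heq
    simp only [Nat.add_sub_cancel] at heq
    exact hk2 (by rw [← heq]; exact hk1)
  have hMup : Nat.card {v : Set.Icc y z // MeetIrred v} ≤ m := by
    have hginj : Function.Injective
        (fun v : {v : Set.Icc y z // MeetIrred v} =>
          (⟨Nat.findGreatest (fun t => W t ≤ (v.1 : α)) n + 1, (hMdata v).2.1⟩ :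
            {t // t ∈ T.erase 0})) := by
      intro v v' heq
      simp only [Subtype.mk.injEq, Nat.add_right_cancel_iff] at heq
      obtain ⟨hkn, -, q, hq, hqa, hqb, hqc⟩ := hMdata v
      obtain ⟨-, -, q', hq', hqa', hqb', hqc'⟩ := hMdata v'
      rw [← heq] at hqa' hqb'
      have hqq := uniqM hX0 hXtop hXcov hXmono hMcard _ hkn q q' hq hq' hqa hqb hqa' hqb'
      apply Subtype.ext; apply Subtype.ext
      rw [← hqc, ← hqc', hqq]
    calc Nat.card {v : Set.Icc y z // MeetIrred v} ≤ Nat.card {t // t ∈ T.erase 0} :=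
          Nat.card_le_card_of_injective _ hginj
      _ = (T.erase 0).card := Nat.card_eq_finsetCard _
      _ = m := by rw [Finset.card_erase_of_mem hT0]
  -- lower bound for join irreducibles
  have hJlo : m ≤ Nat.card {v : Set.Icc y z // JoinIrred v} := by
    have hF : ∀ i : Fin m, ∃ a : Set.Icc y z, JoinIrred a ∧ a ≤ c (Fin.succ i) ∧
        ¬ a ≤ c (Fin.castSucc i) := by
      intro i
      have hne : ({a : Set.Icc y z | a ≤ c (Fin.succ i) ∧ ¬ a ≤ c (Fin.castSucc i)}).Nonempty :=
        ⟨c (Fin.succ i), le_rfl,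
          fun hle => absurd (Subtype.coe_le_coe.2 hle) (not_le_of_gt (hestep i))⟩
      obtain ⟨a, ⟨ha1, ha2⟩, hamin⟩ := exists_min' hne
      refine ⟨a, ⟨?_, ?_⟩, ha1, ha2⟩
      · intro hb; exact ha2 (hb _)
      · intro b c' hb hc' heq
        have hbX : b ≤ c (Fin.castSucc i) := by
          by_contra hh
          exact hamin b ⟨le_trans hb.le ha1, hh⟩ hb
        have hcX : c' ≤ c (Fin.castSucc i) := by
          by_contra hh
          exact hamin c' ⟨le_trans hc'.le ha1, hh⟩ hc'
        exact ha2 (heq ▸ sup_le hbX hcX)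
    choose F hF1 hF2 hF3 using hF
    have hcmono : ∀ {i i' : Fin m}, i < i' → c (Fin.succ i) ≤ c (Fin.castSucc i') := by
      intro i i' hii
      have : (Fin.succ i) ≤ (Fin.castSucc i') := by
        rw [Fin.le_def]
        simp only [Fin.val_succ, Fin.coe_castSucc]
        exact hii
      exact Subtype.coe_le_coe.1 (hWmono (hemono this))
    have hFinj : Function.Injective
        (fun i => (⟨F i, hF1 i⟩ : {v : Set.Icc y z // JoinIrred v})) := by
      intro i i' heq
      simp only [Subtype.mk.injEq] at heq
      by_contra hne'
      rcases lt_or_gt_of_ne hne' with hlt | hlt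
      · exact hF3 i' (heq ▸ le_trans (hF2 i) (hcmono hlt))
      · exact hF3 i (heq ▸ le_trans (hF2 i') (hcmono hlt))
    calc m = Nat.card (Fin m) := by simp
      _ ≤ _ := Nat.card_le_card_of_injective _ hFinj
  -- lower bound for meet irreducibles
  have hMlo : m ≤ Nat.card {v : Set.Icc y z // MeetIrred v} := by
    have hF : ∀ i : Fin m, ∃ a : Set.Icc y z, MeetIrred a ∧ c (Fin.castSucc i) ≤ a ∧
        ¬ c (Fin.succ i) ≤ a := by
      intro i
      have hne : ({a : Set.Icc y z | c (Fin.castSucc i) ≤ a ∧ ¬ c (Fin.succ i) ≤ a}).Nonempty :=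
        ⟨c (Fin.castSucc i), le_rfl,
          fun hle => absurd (Subtype.coe_le_coe.2 hle) (not_le_of_gt (hestep i))⟩
      obtain ⟨a, ⟨ha1, ha2⟩, hamax⟩ := exists_max' hne
      refine ⟨a, ⟨?_, ?_⟩, ha1, ha2⟩
      · intro hb; exact ha2 (hb _)
      · intro b c' hb hc' heq
        have hbX : c (Fin.succ i) ≤ b := by
          by_contra hh
          exact hamax b ⟨le_trans ha1 hb.le, hh⟩ hb
        have hcX : c (Fin.succ i) ≤ c' := by
          by_contra hh
          exact hamax c' ⟨le_trans ha1 hc'.le, hh⟩ hc'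
        exact ha2 (heq ▸ le_inf hbX hcX)
    choose F hF1 hF2 hF3 using hF
    have hcmono : ∀ {i i' : Fin m}, i < i' → c (Fin.succ i) ≤ c (Fin.castSucc i') := by
      intro i i' hii
      have : (Fin.succ i) ≤ (Fin.castSucc i') := by
        rw [Fin.le_def]
        simp only [Fin.val_succ, Fin.coe_castSucc]
        exact hii
      exact Subtype.coe_le_coe.1 (hWmono (hemono this))
    have hFinj : Function.Injective
        (fun i => (⟨F i, hF1 i⟩ : {v : Set.Icc y z // MeetIrred v})) := by
      intro i i' heq
      simp only [Subtype.mk.injEq] at heq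
      by_contra hne'
      rcases lt_or_gt_of_ne hne' with hlt | hlt
      · exact hF3 i (heq ▸ le_trans (hcmono hlt) (hF2 i'))
      · exact hF3 i' (heq ▸ le_trans (hcmono hlt) (hF2 i))
    calc m = Nat.card (Fin m) := by simp
      _ ≤ _ := Nat.card_le_card_of_injective _ hFinj
  exact ⟨m, c, ⟨hc0, hctop, hccov, hclm⟩, le_antisymm hJup hJlo, le_antisymm hMup hMlo⟩
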